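/- Let x : ℝ → ℝ^n be a curve, V1, V2 : ℝ^n → ℝ, N1, N2 : ℝ^n → ℝ nonnegative functions, and h : ℝ → ℝ nonnegative with h(0) = 0. Let Ω ⊆ ℝ^n be a set containing x(t) for all t ≥ 0, and suppose there is a constant B > 0 such that h(s) ≤ B·s for every s in the image N1(Ω). Suppose that for every t ≥ 0 the maps t ↦ V1(x(t)) and t ↦ V2(x(t)) are differentiable with (d/dt)V1(x(t)) ≤ -N1(x(t)) and (d/dt)V2(x(t)) ≤ -N2(x(t)) + h(N1(x(t))). Then for every δ with 0 < δ < 1/B, setting W := V1 + δ·V2 and γ := min(1 - δ·B, δ), one has γ > 0 and, for all t ≥ 0, (d/dt)W(x(t)) ≤ -γ·(N1(x(t)) + N2(x(t))). In particular, the choice δ = 1/(1+B) gives (d/dt)W(x(t)) ≤ -(1/(1+B))·(N1(x(t)) + N2(x(t))). -/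

import Mathlib

open Filter MeasureTheory

theorem stmt_2 {n : ℕ} (x : ℝ → EuclideanSpace ℝ (Fin n))
    (V1 V2 N1 N2 : EuclideanSpace ℝ (Fin n) → ℝ)
    (h : ℝ → ℝ)
    (hN1 : ∀ y, 0 ≤ N1 y) (hN2 : ∀ y, 0 ≤ N2 y)
    (hh : ∀ r, 0 ≤ h r) (hh0 : h 0 = 0)
    (Ω : Set (EuclideanSpace ℝ (Fin n)))
    (hΩ : ∀ t, 0 ≤ t → x t ∈ Ω)
    (B : ℝ) (hB : 0 < B) (hslope : ∀ s ∈ N1 '' Ω, h s ≤ B * s)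
    (v1' v2' : ℝ → ℝ)
    (hd1 : ∀ t, 0 ≤ t → HasDerivAt (fun s => V1 (x s)) (v1' t) t)
    (hd2 : ∀ t, 0 ≤ t → HasDerivAt (fun s => V2 (x s)) (v2' t) t)
    (hineq1 : ∀ t, 0 ≤ t → v1' t ≤ -N1 (x t))
    (hineq2 : ∀ t, 0 ≤ t → v2' t ≤ -N2 (x t) + h (N1 (x t))) :
    (∀ δ : ℝ, 0 < δ → δ < 1 / B →
      0 < min (1 - δ * B) δ ∧
      ∀ t, 0 ≤ t →
        ∃ w', HasDerivAt (fun s => V1 (x s) + δ * V2 (x s)) w' t ∧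
          w' ≤ -(min (1 - δ * B) δ) * (N1 (x t) + N2 (x t))) ∧
    (∀ t, 0 ≤ t →
      ∃ w', HasDerivAt (fun s => V1 (x s) + (1 / (1 + B)) * V2 (x s)) w' t ∧
        w' ≤ -(1 / (1 + B)) * (N1 (x t) + N2 (x t))) := by

  have key : ∀ δ : ℝ, 0 < δ → δ < 1 / B →
      0 < min (1 - δ * B) δ ∧
      ∀ t, 0 ≤ t →
        ∃ w', HasDerivAt (fun s => V1 (x s) + δ * V2 (x s)) w' t ∧
          w' ≤ -(min (1 - δ * B) δ) * (N1 (x t) + N2 (x t)) := by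
    intro δ hδ hδB
    have h1 : δ * B < 1 := (lt_div_iff₀ hB).mp hδB
    constructor
    · exact lt_min (by linarith) hδ
    intro t ht
    refine ⟨v1' t + δ * v2' t, ((hd1 t ht).add ((hd2 t ht).const_mul δ)), ?_⟩
    have hsl : h (N1 (x t)) ≤ B * N1 (x t) := hslope _ ⟨x t, hΩ t ht, rfl⟩
    have e1 := hineq1 t ht
    have e2 := hineq2 t ht
    have hγ1 : min (1 - δ * B) δ ≤ 1 - δ * B := min_le_left _ _
    have hγ2 : min (1 - δ * B) δ ≤ δ := min_le_right _ _
    nlinarith [hN1 (x t), hN2 (x t), mul_le_mul_of_nonneg_left e2 hδ.le,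
      mul_le_mul_of_nonneg_left hsl hδ.le]
  refine ⟨key, ?_⟩
  intro t ht
  have hδ : (0:ℝ) < 1 / (1 + B) := by positivity
  have hδB : 1 / (1 + B) < 1 / B := by
    apply one_div_lt_one_div_of_lt hB; linarith
  obtain ⟨hpos, H⟩ := key (1 / (1 + B)) hδ hδB
  obtain ⟨w', hw, hle⟩ := H t ht
  refine ⟨w', hw, hle.trans ?_⟩
  have : min (1 - 1 / (1 + B) * B) (1 / (1 + B)) = 1 / (1 + B) := by
    rw [min_eq_right]
    have : (1:ℝ) - 1 / (1 + B) * B = 1 / (1 + B) := by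
      field_simp
      ring
    linarith [this.ge]
  rw [this]
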